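/- The function ψ(t) = (1/2)(1−√t)² log((1−√t)²) + (1/2)(1+√t)² log((1+√t)²) − (1+t) log(1+t) is strictly increasing and concave on [0,1], with ψ(0) = 0 and ψ(1) = 2 log 2 (so ψ maps [0,1] onto [0, 2 log 2]). -/

import Mathlib

/-- `ψ(t) = (1/2)(1−√t)² log((1−√t)²) + (1/2)(1+√t)² log((1+√t)²) − (1+t) log(1+t)`
(note `Real.log 0 = 0`). -/
noncomputable def psi (t : ℝ) : ℝ :=
  (1 / 2) * (1 - Real.sqrt t) ^ 2 * Real.log ((1 - Real.sqrt t) ^ 2) +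
    (1 / 2) * (1 + Real.sqrt t) ^ 2 * Real.log ((1 + Real.sqrt t) ^ 2) -
    (1 + t) * Real.log (1 + t)

open Real

noncomputable def phi (s : ℝ) : ℝ :=
  (1+s) * log (1+s) - (1-s) * log (1-s) - s * log (1+s^2)

noncomputable def phi1 (s : ℝ) : ℝ :=
  log (1+s) + log (1-s) + 2 - log (1+s^2) - 2*s^2/(1+s^2)

noncomputable def phi2 (s : ℝ) : ℝ :=
  -(2*s)/(1-s^2) - 2*s/(1+s^2) - 4*s/(1+s^2)^2

lemma hasDerivAt_phi {s : ℝ} (h1 : -1 < s) (h2 : s < 1) :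
    HasDerivAt phi (phi1 s) s := by
  have hp : (1:ℝ) + s ≠ 0 := by linarith
  have hm : (1:ℝ) - s ≠ 0 := by linarith
  have hq : (1:ℝ) + s^2 ≠ 0 := by positivity
  have d1 : HasDerivAt (fun s : ℝ => (1+s) * log (1+s)) (log (1+s) + 1) s := by
    have := (Real.hasDerivAt_mul_log hp).comp s ((hasDerivAt_const s (1:ℝ)).add (hasDerivAt_id s))
    exact this.congr_deriv (by ring)
  have d2 : HasDerivAt (fun s : ℝ => (1-s) * log (1-s)) (-(log (1-s) + 1)) s := by
    have := (Real.hasDerivAt_mul_log hm).comp s ((hasDerivAt_const s (1:ℝ)).sub (hasDerivAt_id s))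
    exact this.congr_deriv (by ring)
  have dq : HasDerivAt (fun s : ℝ => 1 + s^2) (2*s) s := by
    exact ((hasDerivAt_const s (1:ℝ)).add ((hasDerivAt_id s).pow 2)).congr_deriv (by simp)
  have d3 : HasDerivAt (fun s : ℝ => s * log (1+s^2)) (log (1+s^2) + s * (2*s/(1+s^2))) s := by
    have hlog : HasDerivAt (fun s : ℝ => log (1+s^2)) (2*s/(1+s^2)) s := by
      simpa using dq.log hq
    exact ((hasDerivAt_id s).mul hlog).congr_deriv (by simp)
  have := (d1.sub d2).sub d3
  refine this.congr_deriv ?_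
  unfold phi1
  field_simp
  ring

lemma hasDerivAt_phi1 {s : ℝ} (h1 : -1 < s) (h2 : s < 1) :
    HasDerivAt phi1 (phi2 s) s := by
  have hp : (1:ℝ) + s ≠ 0 := by linarith
  have hm : (1:ℝ) - s ≠ 0 := by linarith
  have hq : (0:ℝ) < 1 + s^2 := by positivity
  have dq : HasDerivAt (fun s : ℝ => 1 + s^2) (2*s) s := by
    exact ((hasDerivAt_const s (1:ℝ)).add ((hasDerivAt_id s).pow 2)).congr_deriv (by simp)
  have d1 : HasDerivAt (fun s : ℝ => log (1+s)) (1/(1+s)) s := by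
    simpa using ((hasDerivAt_const s (1:ℝ)).add (hasDerivAt_id s)).log hp
  have d2 : HasDerivAt (fun s : ℝ => log (1-s)) (-(1/(1-s))) s := by
    have := ((hasDerivAt_const s (1:ℝ)).sub (hasDerivAt_id s)).log hm
    exact this.congr_deriv (by simp [neg_div])
  have d3 : HasDerivAt (fun s : ℝ => log (1+s^2)) (2*s/(1+s^2)) s := by
    simpa using dq.log hq.ne'
  have d4 : HasDerivAt (fun s : ℝ => 2*s^2/(1+s^2))
      ((4*s*(1+s^2) - 2*s^2*(2*s))/(1+s^2)^2) s := by
    have dn : HasDerivAt (fun s : ℝ => 2*s^2) (4*s) s := by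
      have := ((hasDerivAt_id s).pow 2).const_mul (2:ℝ)
      exact this.congr_deriv (by simp; ring)
    exact dn.div dq hq.ne'
  have := (((d1.add d2).add (hasDerivAt_const s (2:ℝ))).sub d3).sub d4
  refine (this : HasDerivAt phi1
    ((1/(1+s) + -(1/(1-s)) + 0 - 2*s/(1+s^2)) - (4*s*(1+s^2) - 2*s^2*(2*s))/(1+s^2)^2) s).congr_deriv ?_
  unfold phi2
  have hm2 : (1:ℝ) - s^2 ≠ 0 := by nlinarith
  field_simp
  ring

lemma phi_zero : phi 0 = 0 := by simp [phi]

lemma phi_pos {s : ℝ} (h0 : 0 < s) (h1 : s < 1) : 0 < phi s := by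
  have l1 : 0 ≤ log (1+s^2) := Real.log_nonneg (by nlinarith)
  have l2 : log (1+s^2) ≤ log (1+s) :=
    Real.log_le_log (by positivity) (by nlinarith)
  have l3 : log (1-s) < 0 := Real.log_neg (by linarith) (by linarith)
  have k1 : s * log (1+s^2) ≤ (1+s) * log (1+s) := by nlinarith
  have k2 : 0 < -((1-s) * log (1-s)) := by nlinarith
  unfold phi; nlinarith

lemma phi2_nonpos {s : ℝ} (h0 : 0 < s) (h1 : s < 1) : phi2 s ≤ 0 := by
  have a1 : (0:ℝ) < 1 - s^2 := by nlinarith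
  have a2 : (0:ℝ) < 1 + s^2 := by positivity
  unfold phi2
  have : (0:ℝ) ≤ 2*s/(1-s^2) := by positivity
  have : (0:ℝ) ≤ 2*s/(1+s^2) := by positivity
  have : (0:ℝ) ≤ 4*s/(1+s^2)^2 := by positivity
  have hneg : -(2*s)/(1-s^2) = -(2*s/(1-s^2)) := by ring
  rw [hneg]
  linarith

noncomputable def uu (s : ℝ) : ℝ := phi s - s * phi1 s

lemma uu_nonneg {s : ℝ} (h0 : 0 ≤ s) (h1 : s < 1) : 0 ≤ uu s := by
  have hmono : MonotoneOn uu (Set.Ico 0 1) := by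
    have hint : interior (Set.Ico (0:ℝ) 1) = Set.Ioo 0 1 := interior_Ico
    apply monotoneOn_of_deriv_nonneg (convex_Ico 0 1)
    · intro x hx
      have hx1 : -1 < x := by linarith [hx.1]
      exact ((hasDerivAt_phi hx1 hx.2).sub
        ((hasDerivAt_id x).mul (hasDerivAt_phi1 hx1 hx.2))).continuousAt.continuousWithinAt
    · rw [hint]
      intro x hx
      have hx1 : -1 < x := by linarith [hx.1]
      exact ((hasDerivAt_phi hx1 hx.2).sub
        ((hasDerivAt_id x).mul (hasDerivAt_phi1 hx1 hx.2))).differentiableAt.differentiableWithinAt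
    · rw [hint]
      intro x hx
      have hx1 : -1 < x := by linarith [hx.1]
      have hd : HasDerivAt uu (phi1 x - (1 * phi1 x + x * phi2 x)) x :=
        (hasDerivAt_phi hx1 hx.2).sub ((hasDerivAt_id x).mul (hasDerivAt_phi1 hx1 hx.2))
      rw [hd.deriv]
      have := phi2_nonpos hx.1 hx.2
      nlinarith [hx.1]
  have h00 : uu 0 = 0 := by simp [uu, phi_zero]
  have := hmono (Set.mem_Ico.2 ⟨le_refl 0, one_pos⟩) (Set.mem_Ico.2 ⟨h0, h1⟩) h0
  rw [h00] at this
  exact this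

noncomputable def hh (s : ℝ) : ℝ := phi s / s

lemma hasDerivAt_hh {s : ℝ} (h0 : 0 < s) (h1 : s < 1) :
    HasDerivAt hh ((phi1 s * s - phi s * 1) / s^2) s := by
  exact (hasDerivAt_phi (by linarith) h1).div (hasDerivAt_id s) h0.ne'

lemma hh_antitone : AntitoneOn hh (Set.Ioo 0 1) := by
  apply antitoneOn_of_deriv_nonpos (convex_Ioo 0 1)
  · intro x hx
    exact (hasDerivAt_hh hx.1 hx.2).continuousAt.continuousWithinAt
  · rw [interior_Ioo]
    intro x hx
    exact (hasDerivAt_hh hx.1 hx.2).differentiableAt.differentiableWithinAt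
  · rw [interior_Ioo]
    intro x hx
    rw [(hasDerivAt_hh hx.1 hx.2).deriv]
    have hu := uu_nonneg hx.1.le hx.2
    have hnum : phi1 x * x - phi x * 1 = -(uu x) := by simp [uu]; ring
    rw [hnum]
    have : (0:ℝ) < x^2 := pow_pos hx.1 2
    apply div_nonpos_of_nonpos_of_nonneg <;> linarith

lemma hasDerivAt_psi {t : ℝ} (h0 : 0 < t) (h1 : t < 1) :
    HasDerivAt psi (hh (Real.sqrt t)) t := by
  set s := Real.sqrt t with hsdef
  have hs0 : 0 < s := Real.sqrt_pos.2 h0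
  have hs1 : s < 1 := by
    rw [hsdef, show (1:ℝ) = Real.sqrt 1 by simp]
    exact Real.sqrt_lt_sqrt h0.le h1
  have hts : t = s^2 := (Real.sq_sqrt h0.le).symm
  have hst : HasDerivAt Real.sqrt (1/(2*s)) t := Real.hasDerivAt_sqrt h0.ne'
  have hm : (1:ℝ) - s ≠ 0 := by linarith
  have hp : (1:ℝ) + s ≠ 0 := by linarith
  have i1 : HasDerivAt (fun t : ℝ => (1 - Real.sqrt t)^2)
      (2*(1-s)*(-(1/(2*s)))) t := by
    have := ((hasDerivAt_const t (1:ℝ)).sub hst).pow 2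
    exact this.congr_deriv (by simp [← hsdef])
  have i2 : HasDerivAt (fun t : ℝ => (1 + Real.sqrt t)^2)
      (2*(1+s)*(1/(2*s))) t := by
    have := ((hasDerivAt_const t (1:ℝ)).add hst).pow 2
    exact this.congr_deriv (by simp [← hsdef])
  have o1 : HasDerivAt (fun t : ℝ => (1 - Real.sqrt t)^2 * log ((1 - Real.sqrt t)^2))
      ((log ((1-s)^2) + 1) * (2*(1-s)*(-(1/(2*s))))) t := by
    have := (Real.hasDerivAt_mul_log (pow_ne_zero 2 hm)).comp t i1
    exact this
  have o2 : HasDerivAt (fun t : ℝ => (1 + Real.sqrt t)^2 * log ((1 + Real.sqrt t)^2))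
      ((log ((1+s)^2) + 1) * (2*(1+s)*(1/(2*s)))) t := by
    have := (Real.hasDerivAt_mul_log (pow_ne_zero 2 hp)).comp t i2
    exact this
  have o3 : HasDerivAt (fun t : ℝ => (1 + t) * log (1 + t)) (log (1+t) + 1) t := by
    have h1t : (1:ℝ) + t ≠ 0 := by linarith
    have := (Real.hasDerivAt_mul_log h1t).comp t
      ((hasDerivAt_const t (1:ℝ)).add (hasDerivAt_id t))
    exact this.congr_deriv (by ring)
  have hpsieq : psi = fun t : ℝ =>
      (1/2) * ((1 - Real.sqrt t)^2 * log ((1 - Real.sqrt t)^2)) +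
        (1/2) * ((1 + Real.sqrt t)^2 * log ((1 + Real.sqrt t)^2)) -
        (1 + t) * log (1 + t) := by
    funext x
    unfold psi
    ring
  have total : HasDerivAt psi
      ((1/2) * ((log ((1-s)^2) + 1) * (2*(1-s)*(-(1/(2*s)))))
        + (1/2) * ((log ((1+s)^2) + 1) * (2*(1+s)*(1/(2*s)))) - (log (1+t) + 1)) t := by
    rw [hpsieq]
    exact ((o1.const_mul (1/2:ℝ)).add (o2.const_mul (1/2:ℝ))).sub o3
  convert total using 1
  unfold hh phi
  rw [hts, Real.log_pow, Real.log_pow]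
  push_cast
  field_simp
  ring

lemma continuous_psi : Continuous psi := by
  have hpsieq : psi = fun t : ℝ =>
      (1/2) * ((fun x => x * log x) ((1 - Real.sqrt t)^2)) +
        (1/2) * ((fun x => x * log x) ((1 + Real.sqrt t)^2)) -
        (fun x => x * log x) (1 + t) := by
    funext x
    unfold psi
    simp only []
    ring
  rw [hpsieq]
  have hml := Real.continuous_mul_log
  fun_prop

lemma hh_pos {s : ℝ} (h0 : 0 < s) (h1 : s < 1) : 0 < hh s :=
  div_pos (phi_pos h0 h1) h0

/-- `ψ` is strictly increasing and concave on `[0,1]`, with `ψ(0) = 0` and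
`ψ(1) = 2 log 2`. -/
theorem psi_strictMono_concave :
    StrictMonoOn psi (Set.Icc 0 1) ∧ ConcaveOn ℝ (Set.Icc 0 1) psi ∧
      psi 0 = 0 ∧ psi 1 = 2 * Real.log 2 := by
  have hsqrt_mem : ∀ x ∈ Set.Ioo (0:ℝ) 1, Real.sqrt x ∈ Set.Ioo (0:ℝ) 1 := by
    intro x hx
    constructor
    · exact Real.sqrt_pos.2 hx.1
    · rw [show (1:ℝ) = Real.sqrt 1 by simp]
      exact Real.sqrt_lt_sqrt hx.1.le hx.2
  refine ⟨?_, ?_, ?_, ?_⟩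
  · apply strictMonoOn_of_deriv_pos (convex_Icc 0 1) continuous_psi.continuousOn
    rw [interior_Icc]
    intro x hx
    rw [(hasDerivAt_psi hx.1 hx.2).deriv]
    exact hh_pos (hsqrt_mem x hx).1 (hsqrt_mem x hx).2
  · apply AntitoneOn.concaveOn_of_deriv (convex_Icc 0 1) continuous_psi.continuousOn
    · rw [interior_Icc]
      intro x hx
      exact (hasDerivAt_psi hx.1 hx.2).differentiableAt.differentiableWithinAt
    · rw [interior_Icc]
      intro x hx y hy hxy
      rw [(hasDerivAt_psi hx.1 hx.2).deriv, (hasDerivAt_psi hy.1 hy.2).deriv]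
      exact hh_antitone (hsqrt_mem x hx) (hsqrt_mem y hy) (Real.sqrt_le_sqrt hxy)
  · simp [psi]
  · have : psi 1 = (1/2) * 0 * Real.log 0 + (1/2) * 4 * Real.log 4 - 2 * Real.log 2 := by
      unfold psi
      norm_num
    rw [this, Real.log_zero, show (4:ℝ) = 2^2 by norm_num, Real.log_pow]
    push_cast
    ring
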